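/- arXiv:1806.00949 — 3 statements merged into one kernel-verified Lean document; each statement's English description precedes it below -/
import Mathlib

section
/- For all integers $m \geq 1$ and $n \geq 1$, if $\log^{(m)}(n) \leq 2^{c m^2 \log m}$ for a constant $c > 0$, then $\log^*(n) \leq \log^*(m) + m + O(1)$; consequently $m \geq \Omega(\log^* n)$. -/
/-- The iterated logarithm: `iterLog 0 x = log₂ x`, `iterLog i x = 1 + iterLog (i-1) (log₂ x)`. -/
noncomputable def iterLog : ℕ → ℝ → ℝ
  | 0, x => Real.logb 2 x
  | (i + 1), x => 1 + iterLog i (Real.logb 2 x)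

/-- `log* x`: the number of times `log₂` must be iterated before the result is `≤ 1`.
It satisfies `logStar x = 0` for `x ≤ 1` and `logStar x = 1 + logStar (log₂ x)` for `x > 1`. -/
noncomputable def logStar (x : ℝ) : ℕ :=
  sInf {k | (fun y => Real.logb 2 y)^[k] x ≤ 1}

private lemma key : ∀ k : ℕ, ∀ x y : ℝ, x ≤ y → (fun y => Real.logb 2 y)^[k] y ≤ 1 →
    ∃ j ≤ k, (fun y => Real.logb 2 y)^[j] x ≤ 1 := by
  intro k
  induction k with
  | zero => exact fun x y hxy h => ⟨0, le_refl 0, le_trans hxy h⟩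
  | succ k ih =>
    intro x y hxy h
    by_cases hx : x ≤ 1
    · exact ⟨0, Nat.zero_le _, hx⟩
    · push_neg at hx
      have hy : (0:ℝ) < y := by linarith
      have hL : Real.logb 2 x ≤ Real.logb 2 y :=
        Real.logb_le_logb_of_le one_lt_two (by linarith) hxy
      rw [Function.iterate_succ_apply] at h
      obtain ⟨j, hj, hj1⟩ := ih (Real.logb 2 x) (Real.logb 2 y) hL h
      exact ⟨j + 1, Nat.succ_le_succ hj, by rw [Function.iterate_succ_apply]; exact hj1⟩

private lemma exists_iter_le : ∀ p : ℕ, ∀ y : ℝ, y ≤ 2 ^ p →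
    ∃ j ≤ p, (fun y => Real.logb 2 y)^[j] y ≤ 1 := by
  intro p
  induction p with
  | zero => exact fun y hy => ⟨0, le_refl 0, by simpa using hy⟩
  | succ p ih =>
    intro y hy
    by_cases h1 : y ≤ 1
    · exact ⟨0, Nat.zero_le _, h1⟩
    · push_neg at h1
      have hL : Real.logb 2 y ≤ (p + 1 : ℕ) := by
        rw [Real.logb_le_iff_le_rpow one_lt_two (by linarith)]
        rw [Real.rpow_natCast]
        exact_mod_cast hy
      have hp : ((p + 1 : ℕ) : ℝ) ≤ 2 ^ p := by
        exact_mod_cast Nat.lt_two_pow_self (n := p)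
      obtain ⟨j, hj, hj1⟩ := ih (Real.logb 2 y) (le_trans hL hp)
      obtain ⟨j', hj', hj1'⟩ := key j (Real.logb 2 y) (Real.logb 2 y) le_rfl hj1
      exact ⟨j' + 1, Nat.succ_le_succ (le_trans hj' hj),
        by rw [Function.iterate_succ_apply]; exact hj1'⟩

private lemma logStar_le_of_iter {k : ℕ} {x : ℝ}
    (h : (fun y => Real.logb 2 y)^[k] x ≤ 1) : logStar x ≤ k :=
  Nat.sInf_le h

private lemma logStar_set_nonempty (x : ℝ) :
    {k | (fun y => Real.logb 2 y)^[k] x ≤ 1}.Nonempty := by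
  obtain ⟨p, hp⟩ := exists_nat_ge x
  have : x ≤ 2 ^ p := le_trans hp (by exact_mod_cast (Nat.lt_two_pow_self (n := p)).le)
  obtain ⟨j, _, hj⟩ := exists_iter_le p x this
  exact ⟨j, hj⟩

private lemma logStar_mem (x : ℝ) : (fun y => Real.logb 2 y)^[logStar x] x ≤ 1 :=
  Nat.sInf_mem (logStar_set_nonempty x)

private lemma logStar_le_pow {y : ℝ} {p : ℕ} (h : y ≤ 2 ^ p) : logStar y ≤ p := by
  obtain ⟨j, hj, hj1⟩ := exists_iter_le p y h
  exact le_trans (logStar_le_of_iter hj1) hj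

private lemma logStar_mono {x y : ℝ} (h : x ≤ y) : logStar x ≤ logStar y := by
  obtain ⟨j, hj, hj1⟩ := key (logStar y) x y h (logStar_mem y)
  exact le_trans (logStar_le_of_iter hj1) hj

private lemma logStar_rpow (t : ℝ) : logStar ((2:ℝ) ^ t) ≤ 1 + logStar t := by
  apply logStar_le_of_iter
  rw [add_comm, Function.iterate_succ_apply]
  show (fun y => Real.logb 2 y)^[logStar t] (Real.logb 2 (2 ^ t)) ≤ 1
  rw [Real.logb_rpow (by norm_num) (by norm_num)]
  exact logStar_mem t

private lemma iterLog_eq (m : ℕ) : ∀ x : ℝ,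
    iterLog m x = m + (fun y => Real.logb 2 y)^[m + 1] x := by
  induction m with
  | zero => intro x; simp [iterLog]
  | succ m ih =>
    intro x
    rw [iterLog, ih (Real.logb 2 x)]
    simp only [Function.iterate_succ_apply]
    push_cast
    ring_nf

private lemma four_mul_le_two_pow : ∀ m : ℕ, 4 ≤ m → 4 * m ≤ 2 ^ m := by
  intro m
  induction m with
  | zero => omega
  | succ m ih =>
    intro h
    rcases Nat.lt_or_ge m 4 with h4 | h4
    · interval_cases m <;> simp_all
    · have := ih h4
      have h16 : 4 ≤ 2 ^ m := by
        calc 4 = 2 ^ 2 := rfl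
          _ ≤ 2 ^ m := Nat.pow_le_pow_right (by norm_num) (by omega)
      calc 4 * (m + 1) = 4 * m + 4 := by ring
        _ ≤ 2 ^ m + 2 ^ m := by omega
        _ = 2 ^ (m + 1) := by ring

theorem logstar_from_iterated_log_bound (c : ℝ) (hc : 0 < c) :
    ∃ C : ℝ, ∃ a : ℝ, 0 < a ∧
      ∀ m n : ℕ, 1 ≤ m → 1 ≤ n →
        iterLog m (n : ℝ) ≤ (2 : ℝ) ^ (c * (m : ℝ) ^ 2 * Real.logb 2 m) →
        ((logStar n : ℝ) ≤ (logStar m : ℝ) + m + C ∧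
          a * (logStar n : ℝ) - C ≤ (m : ℝ)) := by
  set M₀ : ℕ := 5 + ⌈c⌉₊ with hM₀
  set D : ℕ := logStar ((2:ℝ) ^ M₀ * (M₀:ℝ) ^ 3) with hD
  refine ⟨((4 + D : ℕ) : ℝ), 1/2, by norm_num, ?_⟩
  intro m n hm hn h
  set t : ℝ := c * (m : ℝ) ^ 2 * Real.logb 2 m with ht
  have hm1 : (1:ℝ) ≤ (m:ℝ) := by exact_mod_cast hm
  -- Step A : iterate bound
  have hA : (fun y => Real.logb 2 y)^[m + 1] (n:ℝ) ≤ (2:ℝ) ^ t := by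
    have := iterLog_eq m (n:ℝ)
    have hm0 : (0:ℝ) ≤ (m:ℝ) := by positivity
    linarith [this ▸ h]
  -- Step B : logStar n ≤ (m+1) + logStar (2^t)
  have hB : logStar (n:ℝ) ≤ (m + 1) + logStar ((2:ℝ) ^ t) := by
    obtain ⟨j, hj, hj1⟩ := key (logStar ((2:ℝ) ^ t)) _ _ hA (logStar_mem _)
    have : (fun y => Real.logb 2 y)^[j + (m + 1)] (n:ℝ) ≤ 1 := by
      rw [Function.iterate_add_apply]; exact hj1
    have := logStar_le_of_iter this
    omega
  -- Step C
  have hC : logStar ((2:ℝ) ^ t) ≤ 1 + logStar t := logStar_rpow t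
  -- logb 2 m ≤ m
  have hmpos : (0:ℝ) < (m:ℝ) := by linarith
  have hm2pow : (m:ℝ) ≤ (2:ℝ) ^ m := by exact_mod_cast (Nat.lt_two_pow_self (n := m)).le
  have hlogbm : Real.logb 2 (m:ℝ) ≤ (m:ℝ) := by
    rw [Real.logb_le_iff_le_rpow one_lt_two hmpos, Real.rpow_natCast]
    exact hm2pow
  have hlogb_nonneg : 0 ≤ Real.logb 2 (m:ℝ) := Real.logb_nonneg one_lt_two hm1
  have hcM : c ≤ (2:ℝ) ^ M₀ := by
    calc c ≤ (⌈c⌉₊ : ℝ) := Nat.le_ceil c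
      _ ≤ (2:ℝ) ^ (⌈c⌉₊ : ℕ) := by exact_mod_cast (Nat.lt_two_pow_self (n := ⌈c⌉₊)).le
      _ ≤ (2:ℝ) ^ M₀ := by
          apply pow_le_pow_right₀ (by norm_num)
          omega
  have ht_le : t ≤ (2:ℝ) ^ M₀ * (m:ℝ) ^ 3 := by
    have h1 : c * (m:ℝ) ^ 2 ≤ (2:ℝ) ^ M₀ * (m:ℝ) ^ 2 :=
      mul_le_mul_of_nonneg_right hcM (by positivity)
    have h2 : c * (m:ℝ) ^ 2 * Real.logb 2 m ≤ ((2:ℝ) ^ M₀ * (m:ℝ) ^ 2) * (m:ℝ) :=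
      mul_le_mul h1 hlogbm hlogb_nonneg (by positivity)
    calc t ≤ ((2:ℝ) ^ M₀ * (m:ℝ) ^ 2) * (m:ℝ) := h2
      _ = (2:ℝ) ^ M₀ * (m:ℝ) ^ 3 := by ring
  -- Step D : logStar t ≤ 2 + logStar m + D
  have hD2 : logStar t ≤ 2 + logStar (m:ℝ) + D := by
    rcases Nat.lt_or_ge m M₀ with hsmall | hbig
    · -- small case
      have : t ≤ (2:ℝ) ^ M₀ * (M₀:ℝ) ^ 3 := by
        refine le_trans ht_le ?_
        have : (m:ℝ) ^ 3 ≤ (M₀:ℝ) ^ 3 := by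
          apply pow_le_pow_left₀ (by positivity)
          exact_mod_cast hsmall.le
        nlinarith [pow_pos (show (0:ℝ) < 2 by norm_num) M₀]
      have := logStar_mono this
      omega
    · -- big case : t ≤ 2 ^ (2 ^ m)
      have hmM : (2:ℝ) ^ M₀ ≤ (2:ℝ) ^ m := pow_le_pow_right₀ (by norm_num) hbig
      have hcube : (m:ℝ) ^ 3 ≤ ((2:ℝ) ^ m) ^ 3 := by
        apply pow_le_pow_left₀ (by positivity) hm2pow
      have hbig2 : t ≤ (2:ℝ) ^ (4 * m) := by
        calc t ≤ (2:ℝ) ^ M₀ * (m:ℝ) ^ 3 := ht_le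
          _ ≤ (2:ℝ) ^ m * ((2:ℝ) ^ m) ^ 3 :=
              mul_le_mul hmM hcube (by positivity) (by positivity)
          _ = (2:ℝ) ^ (4 * m) := by rw [← pow_mul, ← pow_add]; ring_nf
      have h4m : (4 * m : ℕ) ≤ 2 ^ m := four_mul_le_two_pow m (by omega)
      have hbig3 : t ≤ (2:ℝ) ^ (2 ^ m : ℕ) := by
        refine le_trans hbig2 (pow_le_pow_right₀ (by norm_num) h4m)
      have s1 : logStar t ≤ logStar ((2:ℝ) ^ ((2 ^ m : ℕ) : ℝ)) := by
        apply logStar_mono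
        rwa [Real.rpow_natCast]
      have s2 : logStar ((2:ℝ) ^ ((2 ^ m : ℕ) : ℝ)) ≤ 1 + logStar (((2 ^ m : ℕ) : ℝ)) :=
        logStar_rpow _
      have s3 : logStar (((2 ^ m : ℕ) : ℝ)) ≤ 1 + logStar ((m:ℕ) : ℝ) := by
        have : ((2 ^ m : ℕ) : ℝ) = (2:ℝ) ^ ((m:ℕ) : ℝ) := by
          rw [Real.rpow_natCast]; push_cast; ring
        rw [this]
        exact logStar_rpow _
      omega
  -- combine
  have hstarm : logStar (m:ℝ) ≤ m := logStar_le_pow hm2pow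
  have hmain : logStar (n:ℝ) ≤ logStar (m:ℝ) + m + (4 + D) := by omega
  constructor
  · exact_mod_cast hmain
  · have h1 : (logStar (n:ℝ) : ℝ) ≤ (logStar (m:ℝ) : ℝ) + m + ((4 + D : ℕ) : ℝ) := by
      exact_mod_cast hmain
    have h2 : (logStar (m:ℝ) : ℝ) ≤ (m:ℝ) := by exact_mod_cast hstarm
    have h3 : (0:ℝ) ≤ ((4 + D : ℕ) : ℝ) := by positivity
    linarith
end

section
/- A class $\mathcal{H} \subseteq \{0,1\}^X$ has finite Littlestone dimension if and only if there is a finite bound on the number of thresholds it contains; i.e., $\mathrm{Ldim}(\mathcal{H}) = \infty$ iff for every $k$ there exist $x_1,\ldots,x_k \in X$ and $h_1,\ldots,h_k \in \mathcal{H}$ with $h_i(x_j) = 1$ iff $j \geq i$. -/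
/-- `H` shatters some complete mistake tree of depth `d`. -/
def LdimGe {X : Type*} (H : Set (X → Bool)) (d : ℕ) : Prop :=
  ∃ T : List Bool → X, ∀ l : List Bool, l.length = d →
    ∃ h ∈ H, ∀ k < d, h (T (l.take k)) = l.getD k false

/-- `H` contains `k` thresholds: `x₁,…,x_k` and `h₁,…,h_k ∈ H` with
`hᵢ(xⱼ) = 1` iff `j ≥ i`. -/
def ContainsThresholds {X : Type*} (H : Set (X → Bool)) (k : ℕ) : Prop :=
  ∃ (x : Fin k → X) (h : Fin k → X → Bool),
    (∀ i, h i ∈ H) ∧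
    ∀ i j : Fin k, h i (x j) = true ↔ (i : ℕ) ≤ (j : ℕ)

namespace LdimThrAux

def bval : List Bool → ℕ
  | [] => 0
  | c :: r => (if c then 0 else 1) * 2 ^ r.length + bval r

lemma bval_lt (l : List Bool) : bval l < 2 ^ l.length := by
  induction l with
  | nil => simp [bval]
  | cons c r ih =>
    have h2 : 2 ^ (r.length + 1) = 2 ^ r.length + 2 ^ r.length := by ring
    simp only [bval, List.length_cons, h2]
    split <;> omega

lemma bval_append (p s : List Bool) :
    bval (p ++ s) = bval p * 2 ^ s.length + bval s := by
  induction p with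
  | nil => simp [bval]
  | cons c r ih =>
    have hl : (r ++ s).length = r.length + s.length := by simp
    simp only [List.cons_append, bval]
    rw [hl, pow_add, ih]
    ring

lemma bval_key {l : List Bool} {d k : ℕ} (hl : l.length = d) (hk : k < d) :
    (bval l ≤ bval (l.take k) * 2 ^ (d - k) + (2 ^ (d - k - 1) - 1)) ↔
      l.getD k false = true := by
  have hkl : k < l.length := by omega
  have hdrop : l.drop k = l.getD k false :: l.drop (k + 1) := by
    rw [List.getD_eq_getElem _ _ hkl, List.drop_eq_getElem_cons hkl]
  have hdlen : (l.drop k).length = d - k := by simp [hl]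
  have hslen : (l.drop (k + 1)).length = d - k - 1 := by simp [hl]; omega
  have hvl : bval l = bval (l.take k) * 2 ^ (d - k) + bval (l.drop k) := by
    conv_lhs => rw [← List.take_append_drop k l]
    rw [bval_append, hdlen]
  have hvdrop : bval (l.drop k) =
      (if l.getD k false then 0 else 1) * 2 ^ (d - k - 1) + bval (l.drop (k + 1)) := by
    rw [hdrop]
    simp only [bval]
    congr 2
    rw [show (l.drop (k+1)).length = d - k - 1 from hslen]
  have hb : bval (l.drop (k + 1)) < 2 ^ (d - k - 1) := by
    have := bval_lt (l.drop (k + 1)); rwa [hslen] at this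
  have hp : 1 ≤ 2 ^ (d - k - 1) := Nat.one_le_two_pow
  cases hgd : l.getD k false
  · rw [hgd] at hvdrop
    simp at hvdrop
    exact iff_of_false (by omega) (by simp)
  · rw [hgd] at hvdrop
    simp at hvdrop
    exact iff_of_true (by omega) rfl

end LdimThrAux

namespace LdimThrAux

lemma easy {X : Type*} (H : Set (X → Bool)) (hk : ∀ k, ContainsThresholds H k) (d : ℕ) :
    LdimGe H d := by
  obtain ⟨x, h, hmem, hthr⟩ := hk (2 ^ d)
  have hpos : 0 < 2 ^ d := Nat.pow_pos (by norm_num)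
  have hJ : ∀ l : List Bool, l.length < d →
      bval l * 2 ^ (d - l.length) + (2 ^ (d - l.length - 1) - 1) < 2 ^ d := by
    intro l hl
    have h1 : bval l + 1 ≤ 2 ^ l.length := bval_lt l
    have h2 : 2 ^ l.length * 2 ^ (d - l.length) = 2 ^ d := by
      rw [← pow_add]; congr 1; omega
    have h3 : 2 ^ (d - l.length - 1) * 2 = 2 ^ (d - l.length) := by
      rw [← pow_succ]; congr 1; omega
    have h4 : bval l * 2 ^ (d - l.length) + 2 ^ (d - l.length) ≤ 2 ^ d := by
      calc bval l * 2 ^ (d - l.length) + 2 ^ (d - l.length)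
          = (bval l + 1) * 2 ^ (d - l.length) := by ring
        _ ≤ 2 ^ l.length * 2 ^ (d - l.length) := Nat.mul_le_mul_right _ h1
        _ = 2 ^ d := h2
    have h5 : 2 ^ (d - l.length - 1) ≤ 2 ^ (d - l.length) := by omega
    have h6 : 1 ≤ 2 ^ (d - l.length - 1) := Nat.one_le_two_pow
    omega
  refine ⟨fun l => if hl : l.length < d then
      x ⟨bval l * 2 ^ (d - l.length) + (2 ^ (d - l.length - 1) - 1), hJ l hl⟩
    else x ⟨0, hpos⟩, ?_⟩
  intro l hl
  have hbl : bval l < 2 ^ d := by have := bval_lt l; rwa [hl] at this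
  refine ⟨h ⟨bval l, hbl⟩, hmem _, ?_⟩
  intro k hk'
  have htl : (l.take k).length = k := by simp [hl]; omega
  have hkd : (l.take k).length < d := by omega
  simp only [dif_pos hkd]
  have hiff := hthr ⟨bval l, hbl⟩
    ⟨bval (l.take k) * 2 ^ (d - (l.take k).length) + (2 ^ (d - (l.take k).length - 1) - 1),
      hJ _ hkd⟩
  have hkey : (bval l ≤ bval (l.take k) * 2 ^ (d - (l.take k).length) +
      (2 ^ (d - (l.take k).length - 1) - 1)) ↔ l.getD k false = true := by
    rw [htl]; exact bval_key hl hk'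
  cases hgd : l.getD k false
  · rw [hgd] at hkey
    simp only [Bool.false_eq_true, iff_false, not_le] at hkey
    exact Bool.eq_false_iff.mpr (fun hcon => by have := hiff.mp hcon; simp only [Fin.val_mk] at this; omega)
  · rw [hgd] at hkey
    simp only [iff_true] at hkey
    exact hiff.mpr (by simp only [Fin.val_mk]; exact hkey)

end LdimThrAux

namespace LdimThrAux

variable {X : Type*}

def Shat (E : Set (X → Bool)) (T : List Bool → X) (d : ℕ) : Prop :=
  ∀ l : List Bool, l.length = d → ∃ h ∈ E, ∀ k < d, h (T (l.take k)) = l.getD k false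

lemma Shat.mono {E E' : Set (X → Bool)} {T : List Bool → X} {d : ℕ}
    (hE : E ⊆ E') (h : Shat E T d) : Shat E' T d := by
  intro l hl
  obtain ⟨g, hg, hm⟩ := h l hl
  exact ⟨g, hE hg, hm⟩

lemma Shat.nonempty {E : Set (X → Bool)} {T : List Bool → X} {d : ℕ}
    (h : Shat E T d) : ∃ g, g ∈ E := by
  obtain ⟨g, hg, -⟩ := h (List.replicate d false) (by simp)
  exact ⟨g, hg⟩

lemma Shat.mono_depth {E : Set (X → Bool)} {T : List Bool → X} {d e : ℕ}
    (hed : e ≤ d) (h : Shat E T d) : Shat E T e := by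
  intro l hl
  obtain ⟨g, hg, hm⟩ := h (l ++ List.replicate (d - e) false) (by simp [hl]; omega)
  refine ⟨g, hg, fun k hk => ?_⟩
  have h1 : (l ++ List.replicate (d - e) false).take k = l.take k :=
    List.take_append_of_le_length (by omega)
  have h2 : (l ++ List.replicate (d - e) false).getD k false = l.getD k false :=
    List.getD_append _ _ _ _ (by omega)
  rw [← h1, ← h2]
  exact hm k (by omega)

lemma Shat.subtree {E : Set (X → Bool)} {T : List Bool → X} {d : ℕ} (b : Bool)
    (h : Shat E T (d + 1)) :
    Shat {g | g ∈ E ∧ g (T []) = b} (fun l => T (b :: l)) d := by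
  intro l hl
  obtain ⟨g, hg, hm⟩ := h (b :: l) (by simp [hl])
  have h0 : g (T []) = b := by simpa using hm 0 (by omega)
  refine ⟨g, ⟨hg, h0⟩, fun k hk => ?_⟩
  have := hm (k + 1) (by omega)
  simpa using this


lemma prune : ∀ (d : ℕ) (E : Set (X → Bool)) (T : List Bool → X) (f : X → Bool),
    Shat E T d →
    ∃ (a b : ℕ) (T₀ T₁ : List Bool → X), d ≤ a + b ∧ Shat E T₀ a ∧ Shat E T₁ b ∧
      (∀ l : List Bool, l.length < a →
        f (T₀ l) = false ∧ ∃ m : List Bool, m.length < d ∧ T₀ l = T m) ∧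
      (∀ l : List Bool, l.length < b →
        f (T₁ l) = true ∧ ∃ m : List Bool, m.length < d ∧ T₁ l = T m) := by
  intro d
  induction d with
  | zero =>
    intro E T f h
    exact ⟨0, 0, T, T, le_refl _, h, h,
      fun l hl => absurd hl (by omega), fun l hl => absurd hl (by omega)⟩
  | succ d ih =>
    intro E T f h
    obtain ⟨aL, bL, TL0, TL1, hsumL, hSL0, hSL1, hfL0, hfL1⟩ := ih _ _ f (h.subtree false)
    obtain ⟨aR, bR, TR0, TR1, hsumR, hSR0, hSR1, hfR0, hfR1⟩ := ih _ _ f (h.subtree true)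
    cases hfx : f (T []) with
    | false =>
      refine ⟨min aL aR + 1, max bL bR,
        (fun l => match l with
          | [] => T []
          | (c :: r) => if c then TR0 r else TL0 r),
        (if bL ≤ bR then TR1 else TL1), ?_, ?_, ?_, ?_, ?_⟩
      · omega
      · -- Shat of node tree at depth min+1
        intro l hl
        cases l with
        | nil => simp at hl
        | cons c r =>
          have hr : r.length = min aL aR := by simpa using hl
          cases c with
          | false =>
            obtain ⟨g, hg, hm⟩ := (hSL0.mono_depth (min_le_left _ _)) r hr
            refine ⟨g, hg.1, fun k hk => ?_⟩
            match k with
            | 0 => simpa using hg.2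
            | (k + 1) =>
              have := hm k (by omega)
              simpa using this
          | true =>
            obtain ⟨g, hg, hm⟩ := (hSR0.mono_depth (min_le_right _ _)) r hr
            refine ⟨g, hg.1, fun k hk => ?_⟩
            match k with
            | 0 => simpa using hg.2
            | (k + 1) =>
              have := hm k (by omega)
              simpa using this
      · -- Shat of 1-minor at depth max
        by_cases hbb : bL ≤ bR
        · rw [if_pos hbb, max_eq_right hbb]
          exact hSR1.mono (fun g hg => hg.1)
        · rw [if_neg hbb, max_eq_left (le_of_not_ge hbb)]
          exact hSL1.mono (fun g hg => hg.1)
      · -- f-condition and node condition for T₀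
        intro l hl
        cases l with
        | nil => exact ⟨hfx, [], by simp, rfl⟩
        | cons c r =>
          have hr : r.length < min aL aR := by simp at hl; omega
          cases c with
          | false =>
            obtain ⟨h1, m, hm, hEq⟩ := hfL0 r (lt_of_lt_of_le hr (min_le_left _ _))
            exact ⟨by simpa using h1, false :: m, by simp; omega, by simpa using hEq⟩
          | true =>
            obtain ⟨h1, m, hm, hEq⟩ := hfR0 r (lt_of_lt_of_le hr (min_le_right _ _))
            exact ⟨by simpa using h1, true :: m, by simp; omega, by simpa using hEq⟩
      · -- f-condition and node condition for T₁
        intro l hl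
        by_cases hbb : bL ≤ bR
        · rw [max_eq_right hbb] at hl
          obtain ⟨h1, m, hm, hEq⟩ := hfR1 l hl
          simp only [if_pos hbb]
          exact ⟨h1, true :: m, by simp; omega, hEq⟩
        · rw [max_eq_left (le_of_not_ge hbb)] at hl
          obtain ⟨h1, m, hm, hEq⟩ := hfL1 l hl
          simp only [if_neg hbb]
          exact ⟨h1, false :: m, by simp; omega, hEq⟩
    | true =>
      refine ⟨max aL aR, min bL bR + 1,
        (if aL ≤ aR then TR0 else TL0),
        (fun l => match l with
          | [] => T []
          | (c :: r) => if c then TR1 r else TL1 r), ?_, ?_, ?_, ?_, ?_⟩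
      · omega
      · by_cases haa : aL ≤ aR
        · rw [if_pos haa, max_eq_right haa]
          exact hSR0.mono (fun g hg => hg.1)
        · rw [if_neg haa, max_eq_left (le_of_not_ge haa)]
          exact hSL0.mono (fun g hg => hg.1)
      · intro l hl
        cases l with
        | nil => simp at hl
        | cons c r =>
          have hr : r.length = min bL bR := by simpa using hl
          cases c with
          | false =>
            obtain ⟨g, hg, hm⟩ := (hSL1.mono_depth (min_le_left _ _)) r hr
            refine ⟨g, hg.1, fun k hk => ?_⟩
            match k with
            | 0 => simpa using hg.2
            | (k + 1) =>
              have := hm k (by omega)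
              simpa using this
          | true =>
            obtain ⟨g, hg, hm⟩ := (hSR1.mono_depth (min_le_right _ _)) r hr
            refine ⟨g, hg.1, fun k hk => ?_⟩
            match k with
            | 0 => simpa using hg.2
            | (k + 1) =>
              have := hm k (by omega)
              simpa using this
      · intro l hl
        by_cases haa : aL ≤ aR
        · rw [max_eq_right haa] at hl
          obtain ⟨h1, m, hm, hEq⟩ := hfR0 l hl
          simp only [if_pos haa]
          exact ⟨h1, true :: m, by simp; omega, hEq⟩
        · rw [max_eq_left (le_of_not_ge haa)] at hl
          obtain ⟨h1, m, hm, hEq⟩ := hfL0 l hl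
          simp only [if_neg haa]
          exact ⟨h1, false :: m, by simp; omega, hEq⟩
      · intro l hl
        cases l with
        | nil => exact ⟨hfx, [], by simp, rfl⟩
        | cons c r =>
          have hr : r.length < min bL bR := by simp at hl; omega
          cases c with
          | false =>
            obtain ⟨h1, m, hm, hEq⟩ := hfL1 r (lt_of_lt_of_le hr (min_le_left _ _))
            exact ⟨by simpa using h1, false :: m, by simp; omega, by simpa using hEq⟩
          | true =>
            obtain ⟨h1, m, hm, hEq⟩ := hfR1 r (lt_of_lt_of_le hr (min_le_right _ _))
            exact ⟨by simpa using h1, true :: m, by simp; omega, by simpa using hEq⟩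


lemma main : ∀ (t : ℕ) (E : Set (X → Bool)) (T : List Bool → X) (L : ℕ) (P : X → Prop),
    Shat E T L → 8 ^ t ≤ L → (∀ l : List Bool, l.length < L → P (T l)) →
    ∃ (x : Fin t → X) (h : Fin t → X → Bool), (∀ i, h i ∈ E) ∧
      (∀ i j, h i (x j) = true ↔ (i : ℕ) ≤ (j : ℕ)) ∧ (∀ j, P (x j)) := by
  intro t
  induction t with
  | zero =>
    intro E T L P hS hL hP
    exact ⟨Fin.elim0, Fin.elim0, fun i => i.elim0, fun i => i.elim0, fun j => j.elim0⟩
  | succ t ih =>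
    intro E T L P hS hL hP
    have h8 : 8 ^ (t + 1) = 8 * 8 ^ t := by ring
    have h8pos : 1 ≤ 8 ^ t := Nat.one_le_pow _ _ (by norm_num)
    rw [h8] at hL
    obtain ⟨L₁, rfl⟩ : ∃ L₁, L = L₁ + 1 := ⟨L - 1, by omega⟩
    have hSR : Shat {g | g ∈ E ∧ g (T []) = true} (fun l => T (true :: l)) L₁ :=
      hS.subtree true
    obtain ⟨f, hf⟩ := hSR.nonempty
    obtain ⟨a, b, T₀, T₁, hab, hS0, hS1, hf0, hf1⟩ := prune L₁ _ _ f hSR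
    by_cases hba : b ≤ a
    · -- case A: the root becomes the largest threshold point
      have ha : 8 ^ t ≤ a := by omega
      have hnodes : ∀ l : List Bool, l.length < a → P (T₀ l) ∧ f (T₀ l) = false := by
        intro l hl
        obtain ⟨hfl, m, hm, hEq⟩ := hf0 l hl
        refine ⟨?_, hfl⟩
        rw [hEq]
        exact hP (true :: m) (by simp; omega)
      obtain ⟨x', h', hmem', hthr', hP'⟩ :=
        ih _ T₀ a (fun w => P w ∧ f w = false) hS0 ha hnodes
      refine ⟨Fin.snoc x' (T []), Fin.snoc h' f, ?_, ?_, ?_⟩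
      · intro i
        refine Fin.lastCases ?_ (fun i' => ?_) i
        · simpa [Fin.snoc_last] using hf.1
        · simpa [Fin.snoc_castSucc] using (hmem' i').1
      · intro i j
        refine Fin.lastCases ?_ (fun i' => ?_) i
        · refine Fin.lastCases ?_ (fun j' => ?_) j
          · simp [Fin.snoc_last, hf.2]
          · have h0 := (hP' j').2
            have hj := j'.isLt
            simp only [Fin.snoc_last, Fin.snoc_castSucc, Fin.val_last, Fin.coe_castSucc, h0]
            constructor
            · intro hcon; exact absurd hcon (by simp)
            · omega
        · refine Fin.lastCases ?_ (fun j' => ?_) j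
          · have h0 := (hmem' i').2
            have hi := i'.isLt
            simp only [Fin.snoc_last, Fin.snoc_castSucc, Fin.coe_castSucc, Fin.val_last]
            exact iff_of_true h0 (by omega)
          · simpa [Fin.snoc_castSucc] using hthr' i' j'
      · intro j
        refine Fin.lastCases ?_ (fun j' => ?_) j
        · simpa [Fin.snoc_last] using hP [] (by simp)
        · simpa [Fin.snoc_castSucc] using (hP' j').1
    · -- case B: the root of the 1-minor becomes the smallest threshold point
      have hblt : a < b := not_le.mp hba
      obtain ⟨b₁, rfl⟩ : ∃ b₁, b = b₁ + 1 := ⟨b - 1, by omega⟩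
      have hb : 8 ^ t ≤ b₁ := by omega
      have hz := hf1 [] (by simp)
      have hS1' : Shat {g | g ∈ {g | g ∈ E ∧ g (T []) = true} ∧ g (T₁ []) = false}
          (fun l => T₁ (false :: l)) b₁ := hS1.subtree false
      have hnodes : ∀ l : List Bool, l.length < b₁ →
          P ((fun l => T₁ (false :: l)) l) ∧ f ((fun l => T₁ (false :: l)) l) = true := by
        intro l hl
        obtain ⟨hfl, m, hm, hEq⟩ := hf1 (false :: l) (by simp; omega)
        constructor
        · show P (T₁ (false :: l))
          rw [hEq]
          exact hP (true :: m) (by simp; omega)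
        · exact hfl
      obtain ⟨x', h', hmem', hthr', hP'⟩ :=
        ih _ _ b₁ (fun w => P w ∧ f w = true) hS1' hb hnodes
      refine ⟨Fin.cons (T₁ []) x', Fin.cons f h', ?_, ?_, ?_⟩
      · intro i
        refine Fin.cases ?_ (fun i' => ?_) i
        · exact hf.1
        · exact (hmem' i').1.1
      · intro i j
        refine Fin.cases ?_ (fun i' => ?_) i
        · refine Fin.cases ?_ (fun j' => ?_) j
          · simp [Fin.cons_zero, hz.1]
          · simp [Fin.cons_zero, Fin.cons_succ, (hP' j').2]
        · refine Fin.cases ?_ (fun j' => ?_) j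
          · have h0 := (hmem' i').2
            simp [Fin.cons_zero, Fin.cons_succ, h0]
          · have h0 := hthr' i' j'
            simp only [Fin.cons_succ, Fin.val_succ, h0]
            omega
      · intro j
        refine Fin.cases ?_ (fun j' => ?_) j
        · obtain ⟨-, m, hm, hEq⟩ := hz
          rw [Fin.cons_zero, hEq]
          exact hP (true :: m) (by simp; omega)
        · simpa [Fin.cons_succ] using (hP' j').1

end LdimThrAux


/-- Infinite Littlestone dimension iff `H` contains arbitrarily many thresholds. -/
theorem ldim_infinite_iff_unbounded_thresholds {X : Type*} (H : Set (X → Bool)) :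
    (∀ d : ℕ, LdimGe H d) ↔ (∀ k : ℕ, ContainsThresholds H k) := by
  constructor
  · intro hd k
    obtain ⟨T, hT⟩ := hd (8 ^ k)
    have hS : LdimThrAux.Shat H T (8 ^ k) := hT
    obtain ⟨x, h, hmem, hthr, -⟩ :=
      LdimThrAux.main k H T (8 ^ k) (fun _ => True) hS le_rfl (fun _ _ => trivial)
    exact ⟨x, h, hmem, hthr⟩
  · intro hk d
    exact LdimThrAux.easy H hk d
end

section
/- Let $X = \{1,\ldots,k\}$ be $m$-homogeneous with respect to a $(0.1,\delta)$-differentially private algorithm $A$ with $\delta \leq \frac{1}{10^3 m^2 \log m}$, and suppose $A$ is a $(1/16,1/16)$-accurate empirical learner for thresholds over $X$. Let $(p_i)_{i=0}^m$ be the probabilities-list and let $i$ be an index with $p_i - p_{i-1} \geq \frac{1}{4m}$. Then, setting $n = k - m$, there exists a family $\mathcal{P} = \{P_1,\ldots,P_n\}$ of distributions over $\{\pm1\}^n$ such that every pair $P_i,P_j$ is $(0.1,\delta)$-indistinguishable, and there is $r \in [0,1]$ with $\Pr_{v\sim P_i}[v(j)=1] \leq r - \frac{1}{10m}$ for $j<i$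 and $\geq r + \frac{1}{10m}$ for $j>i$. -/
noncomputable def massProb {α : Type*} (p : α → ℝ) (E : Set α) : ℝ :=
  ∑' a, Set.indicator E p a

def IsProbMass {α : Type*} (p : α → ℝ) : Prop :=
  (∀ a, 0 ≤ p a) ∧ HasSum p 1

def Indist {α : Type*} (p q : α → ℝ) (ε δ : ℝ) : Prop :=
  ∀ E : Set α,
    massProb p E ≤ Real.exp ε * massProb q E + δ ∧
    massProb q E ≤ Real.exp ε * massProb p E + δ

/-- The threshold function `x ↦ 1[x ≥ t]` on `X = {1, …, k}` (as `Fin k`,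
`x ↦ x + 1`). -/
def thr {k : ℕ} (t : ℕ) (x : Fin k) : Bool := decide (t ≤ (x : ℕ) + 1)

/-- The balanced increasing realizable sample determined by a strictly
increasing tuple of points: the first half labeled `-1` (false), the second
half `+1` (true). -/
def balSample {k m : ℕ} (x : Fin m → Fin k) : Fin m → Fin k × Bool :=
  fun i => (x i, decide (m / 2 ≤ (i : ℕ)))

/-- `A_S(y) = Pr_{h ∼ A(S)}[h(y) = 1]`. -/
noncomputable def AS {k m : ℕ}
    (A : (Fin m → Fin k × Bool) → (Fin k → Bool) → ℝ)
    (S : Fin m → Fin k × Bool) (y : Fin k) : ℝ :=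
  massProb (A S) {h | h y = true}

/-- `ord_S(y) = |{i : xᵢ ≤ y}|`. -/
def ordS {k m : ℕ} (x : Fin m → Fin k) (y : Fin k) : ℕ :=
  (Finset.univ.filter fun i => x i ≤ y).card

/-! ### Auxiliary material for the construction -/

lemma massProb_fintype {α : Type*} [Fintype α] (p : α → ℝ) (E : Set α) :
    massProb p E = ∑ a : α, Set.indicator E p a := tsum_fintype _

open scoped Classical in
/-- Pushforward of a mass function along a map between finite types. -/
noncomputable def pushMass {α β : Type*} [Fintype α] (f : α → β) (p : α → ℝ) : β → ℝ :=
  fun b => ∑ a : α, if f a = b then p a else 0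

lemma massProb_pushMass {α β : Type*} [Fintype α] [Fintype β] (f : α → β) (p : α → ℝ)
    (E : Set β) : massProb (pushMass f p) E = massProb p (f ⁻¹' E) := by
  classical
  rw [massProb_fintype, massProb_fintype]
  have : ∀ b, Set.indicator E (pushMass f p) b
      = ∑ a : α, if f a = b ∧ b ∈ E then p a else 0 := by
    intro b
    rw [Set.indicator_apply]
    split_ifs with hb
    · simp [pushMass, hb]
    · simp [hb]
  simp_rw [this]
  rw [Finset.sum_comm]
  refine Finset.sum_congr rfl fun a _ => ?_
  rw [Set.indicator_apply]
  rw [Finset.sum_eq_single (f a)]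
  · simp [Set.mem_preimage]
  · intro b _ hb
    split_ifs with h
    · exact absurd h.1.symm hb
    · rfl
  · simp

lemma isProbMass_pushMass {α β : Type*} [Fintype α] [Fintype β] (f : α → β) (p : α → ℝ)
    (hp : IsProbMass p) : IsProbMass (pushMass f p) := by
  classical
  have hsum : ∑ a : α, p a = 1 := (hasSum_fintype p).unique hp.2
  constructor
  · intro b
    refine Finset.sum_nonneg fun a _ => ?_
    split_ifs
    · exact hp.1 a
    · exact le_rfl
  · have : ∑ b : β, pushMass f p b = 1 := by
      unfold pushMass
      rw [Finset.sum_comm]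
      rw [← hsum]
      refine Finset.sum_congr rfl fun a _ => ?_
      rw [Finset.sum_eq_single (f a)]
      · simp
      · intro b _ hb
        split_ifs with h
        · exact absurd h.symm hb
        · rfl
      · simp
    rw [← this]
    exact hasSum_fintype _

lemma indist_pushMass {α β : Type*} [Fintype α] [Fintype β] (f : α → β) (p q : α → ℝ)
    (ε δ : ℝ) (h : Indist p q ε δ) : Indist (pushMass f p) (pushMass f q) ε δ := by
  intro E
  rw [massProb_pushMass, massProb_pushMass]
  exact h (f ⁻¹' E)

/-- The sample points of the `t`-th sample: fixed low block `0,…,i₀-2`,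
moving point `i₀-1+t`, fixed high block `n+i₀,…,n+m-1`. -/
def xsAux (k m i₀ n : ℕ) (t : Fin n) (hk : m + n = k) (_h1 : 1 ≤ i₀)
    (_h2 : i₀ ≤ m) : Fin m → Fin k := fun i =>
  ⟨if (i : ℕ) < i₀ - 1 then i else if (i : ℕ) = i₀ - 1 then i₀ - 1 + t else n + i,
    by have := i.isLt; have := t.isLt; split_ifs <;> omega⟩

/-- The query points: `i₀-1, …, i₀+n-2`. -/
def yAux (k m i₀ n : ℕ) (hk : m + n = k) (h1 : 1 ≤ i₀) (h2 : i₀ ≤ m)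
    (j : Fin n) : Fin k :=
  ⟨i₀ - 1 + j, by have := j.isLt; omega⟩

lemma xsAux_strictMono (k m i₀ n : ℕ) (t : Fin n) (hk : m + n = k)
    (h1 : 1 ≤ i₀) (h2 : i₀ ≤ m) : StrictMono (xsAux k m i₀ n t hk h1 h2) := by
  intro a b hab
  have ha := a.isLt; have hb := b.isLt; have ht := t.isLt
  have hab' : (a : ℕ) < b := hab
  rw [Fin.lt_def]
  simp only [xsAux]
  split_ifs <;> omega

lemma xsAux_ne_y (k m i₀ n : ℕ) (t j : Fin n) (hk : m + n = k)
    (h1 : 1 ≤ i₀) (h2 : i₀ ≤ m) (hjt : (j : ℕ) ≠ t) (i : Fin m) :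
    xsAux k m i₀ n t hk h1 h2 i ≠ yAux k m i₀ n hk h1 h2 j := by
  have ha := i.isLt; have ht := t.isLt; have hj := j.isLt
  rw [Ne, Fin.ext_iff]
  simp only [xsAux, yAux]
  split_ifs <;> omega

lemma card_filter_val_lt' {m c : ℕ} (hc : c ≤ m) :
    (Finset.univ.filter fun i : Fin m => (i : ℕ) < c).card = c := by
  rcases eq_or_lt_of_le hc with h | h
  · subst h
    simp [Finset.filter_true_of_mem, Fin.is_lt]
  · have : (Finset.univ.filter fun i : Fin m => (i : ℕ) < c) = Finset.Iio ⟨c, h⟩ := by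
      ext i; simp [Fin.lt_def]
    rw [this, Fin.card_Iio]

lemma xsAux_le_y_iff (k m i₀ n : ℕ) (t j : Fin n) (hk : m + n = k)
    (h1 : 1 ≤ i₀) (h2 : i₀ ≤ m) (i : Fin m) :
    (xsAux k m i₀ n t hk h1 h2 i ≤ yAux k m i₀ n hk h1 h2 j
      ↔ (i : ℕ) < i₀ - 1 + (if (t : ℕ) ≤ j then 1 else 0)) := by
  have ha := i.isLt; have ht := t.isLt; have hj := j.isLt
  rw [Fin.le_def]
  simp only [xsAux, yAux]
  split_ifs <;> omega

lemma ordS_xsAux (k m i₀ n : ℕ) (t j : Fin n) (hk : m + n = k)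
    (h1 : 1 ≤ i₀) (h2 : i₀ ≤ m) :
    ordS (xsAux k m i₀ n t hk h1 h2) (yAux k m i₀ n hk h1 h2 j)
      = i₀ - 1 + (if (t : ℕ) ≤ j then 1 else 0) := by
  unfold ordS
  have heq : (Finset.univ.filter fun i : Fin m =>
      xsAux k m i₀ n t hk h1 h2 i ≤ yAux k m i₀ n hk h1 h2 j)
      = Finset.univ.filter fun i : Fin m =>
        (i : ℕ) < i₀ - 1 + (if (t : ℕ) ≤ j then 1 else 0) := by
    ext i
    simp only [Finset.mem_filter, Finset.mem_univ, true_and]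
    exact xsAux_le_y_iff k m i₀ n t j hk h1 h2 i
  rw [heq, card_filter_val_lt' (by split_ifs <;> omega)]

/-- Construction of the family `𝒫` of pairwise-indistinguishable distributions
over `{±1}ⁿ` (with `n = k - m`) from a private empirical learner for thresholds
over an `m`-homogeneous domain `{1,…,k}` whose probabilities-list has a gap of
`1/(4m)` at index `i₀`. -/
theorem homogeneous_to_family (k m : ℕ) (hm : 1 ≤ m) (hme : Even m)
    (hkm : m < k) (δ : ℝ) (hδ0 : 0 ≤ δ)
    (hδ : δ ≤ 1 / (10 ^ 3 * (m : ℝ) ^ 2 * Real.logb 2 m))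
    (A : (Fin m → Fin k × Bool) → (Fin k → Bool) → ℝ)
    (hmass : ∀ S, IsProbMass (A S))
    -- `(0.1, δ)`-differential privacy:
    (hpriv : ∀ S S' : Fin m → Fin k × Bool,
      (∃ i₀, ∀ i, i ≠ i₀ → S i = S' i) → Indist (A S) (A S') 0.1 δ)
    -- `(1/16,1/16)`-accurate empirical learner for thresholds:
    (hacc : ∀ t : ℕ, ∀ x : Fin m → Fin k,
      15 / 16 ≤ massProb (A fun i => (x i, thr t (x i)))
        {f | ((Finset.univ.filter fun i => f (x i) ≠ thr t (x i)).card : ℝ)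
              / m ≤ 1 / 16})
    -- `{1,…,k}` is `m`-homogeneous with probabilities-list `p`:
    (p : ℕ → ℝ) (hp : ∀ i ≤ m, p i ∈ Set.Icc (0 : ℝ) 1)
    (hhom : ∀ x : Fin m → Fin k, StrictMono x →
      ∀ y : Fin k, (∀ i, x i ≠ y) →
        |AS A (balSample x) y - p (ordS x y)| ≤ 1 / (100 * m))
    -- the gap index:
    (i₀ : ℕ) (hi₀ : 1 ≤ i₀ ∧ i₀ ≤ m)
    (hgap : 1 / (4 * m) ≤ p i₀ - p (i₀ - 1)) :
    ∃ P : Fin (k - m) → (Fin (k - m) → Bool) → ℝ,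
      (∀ i, IsProbMass (P i)) ∧
      (∀ i j, Indist (P i) (P j) 0.1 δ) ∧
      ∃ r ∈ Set.Icc (0 : ℝ) 1, ∀ i j : Fin (k - m),
        ((j : ℕ) < (i : ℕ) →
          massProb (P i) {v | v j = true} ≤ r - 1 / (10 * m)) ∧
        ((i : ℕ) < (j : ℕ) →
          r + 1 / (10 * m) ≤ massProb (P i) {v | v j = true}) := by
  obtain ⟨h1, h2⟩ := hi₀
  have hk : m + (k - m) = k := by omega
  -- the query points and samples
  set n := k - m with hn
  have hy := yAux k m i₀ n hk h1 h2
  -- the map restricting a hypothesis to the query points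
  set φ : (Fin k → Bool) → (Fin n → Bool) :=
    fun h j => h (yAux k m i₀ n hk h1 h2 j) with hφ
  -- the samples
  set S : Fin n → (Fin m → Fin k × Bool) :=
    fun t => balSample (xsAux k m i₀ n t hk h1 h2) with hS
  refine ⟨fun t => pushMass φ (A (S t)), fun t => isProbMass_pushMass _ _ (hmass _),
    ?_, ?_⟩
  · -- privacy
    intro t t'
    refine indist_pushMass _ _ _ _ _ (hpriv _ _ ⟨⟨i₀ - 1, by omega⟩, fun i hi => ?_⟩)
    have hi' : (i : ℕ) ≠ i₀ - 1 := fun h => hi (Fin.ext h)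
    have hx : xsAux k m i₀ n t hk h1 h2 i = xsAux k m i₀ n t' hk h1 h2 i := by
      rw [Fin.ext_iff]
      simp only [xsAux]
      split_ifs <;> omega
    simp only [hS, balSample, hx]
  · -- the separation
    have hm0 : (0 : ℝ) < m := by exact_mod_cast hm
    have hp1 := hp (i₀ - 1) (by omega)
    have hp2 := hp i₀ h2
    refine ⟨(p (i₀ - 1) + p i₀) / 2,
      ⟨by have := hp1.1; have := hp2.1; linarith,
       by have := hp1.2; have := hp2.2; linarith⟩, fun t j => ?_⟩
    -- identify the marginal with A_S(yⱼ)
    have hmarg : massProb (pushMass φ (A (S t))) {v | v j = true}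
        = AS A (S t) (yAux k m i₀ n hk h1 h2 j) := by
      rw [massProb_pushMass]
      rfl
    -- basic inequality between the constants
    have haux : 1 / (100 * (m : ℝ)) + 1 / (10 * m) ≤ (1 / (4 * m)) / 2 := by
      have e1 : (1 : ℝ) / (100 * m) = (1 / 100) / m := (div_div 1 100 (m : ℝ)).symm
      have e2 : (1 : ℝ) / (10 * m) = (1 / 10) / m := (div_div 1 10 (m : ℝ)).symm
      have e3 : ((1 : ℝ) / (4 * m)) / 2 = (1 / 8) / m := by
        rw [← div_div 1 4 (m : ℝ), div_div ((1 : ℝ) / 4) (m : ℝ) 2,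
          mul_comm (m : ℝ) 2, ← div_div]
        norm_num
      rw [e1, e2, e3, ← add_div]
      gcongr
      norm_num
    constructor
    · -- j < t
      intro hjt
      have habs := hhom _ (xsAux_strictMono k m i₀ n t hk h1 h2) _
        (xsAux_ne_y k m i₀ n t j hk h1 h2 (by omega))
      rw [ordS_xsAux k m i₀ n t j hk h1 h2, if_neg (by omega)] at habs
      have := (abs_le.mp habs).2
      rw [hmarg]
      simp only [Nat.add_zero] at this
      linarith
    · -- t < j
      intro htj
      have habs := hhom _ (xsAux_strictMono k m i₀ n t hk h1 h2) _
        (xsAux_ne_y k m i₀ n t j hk h1 h2 (by omega))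
      rw [ordS_xsAux k m i₀ n t j hk h1 h2, if_pos (by omega)] at habs
      have := (abs_le.mp habs).1
      have hi0 : i₀ - 1 + 1 = i₀ := by omega
      rw [hi0] at habs
      have := (abs_le.mp habs).1
      rw [hmarg]
      linarith
end
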